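/- Let Γ = (X, 𝒞, O) be a compatibility scenario and B a behavior for Γ such that for each context C ∈ 𝒞 the distribution B(C) has full support (B(C)(a) > 0 for all a : C → O). Define E_u(B) = (1/|𝒞|) · inf{ ∑_{C ∈ 𝒞} D_KL(B(C) ‖ B^{NC}(C)) : B^{NC} a noncontextual behavior }, where D_KL(p ‖ q) = ∑_a p(a) · log(p(a)/q(a)) ∈ [0, ∞] (with the conventions 0·log(0/q) = 0 and p·log(p/0) = ∞ for p > 0). Then E_u(B) = 0 if and only if B is noncontextual. -/

import Mathlib

/-- A probability distribution on a finite type `S`. -/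
def IsProbDist {S : Type*} [Fintype S] (p : S → ℝ) : Prop :=
  (∀ s, 0 ≤ p s) ∧ ∑ s, p s = 1

/-- The real vector space of behaviors for the scenario with measurements `X`,
contexts `𝒞` and outcomes `O`: vectors in `∏_{C ∈ 𝒞} ((C → O) → ℝ)`. -/
abbrev BSpace {X : Type*} (𝒞 : Finset (Finset X)) (O : Type*) : Type _ :=
  (C : {C : Finset X // C ∈ 𝒞}) → ({x // x ∈ C.1} → O) → ℝ

/-- A behavior is noncontextual if some probability distribution on global
assignments `X → O` has it as its family of context marginals. -/
def NCbehavior {X O : Type*} [Fintype X] [DecidableEq X] [Fintype O] [DecidableEq O]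
    (𝒞 : Finset (Finset X)) (B : BSpace 𝒞 O) : Prop :=
  ∃ p : (X → O) → ℝ, IsProbDist p ∧
    ∀ (C : {C : Finset X // C ∈ 𝒞}) (f : {x // x ∈ C.1} → O),
      B C f = ∑ g : X → O, if ∀ x : {x // x ∈ C.1}, g x.1 = f x then p g else 0

/-- The Kullback–Leibler divergence `D_KL(p ‖ q) = ∑ a, p a · log (p a / q a)` with
values in `EReal = [−∞, ∞]`, with the conventions `0·log(0/q) = 0` and
`p·log(p/0) = ∞` for `p > 0`. -/
noncomputable def DKL {S : Type*} [Fintype S] (p q : S → ℝ) : EReal :=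
  open Classical in
  ∑ a, if p a = 0 then (0 : EReal)
    else if q a = 0 then (⊤ : EReal)
    else ((p a * Real.log (p a / q a) : ℝ) : EReal)

lemma EReal_sum_coe {ι : Type*} (s : Finset ι) (f : ι → ℝ) :
    (∑ i ∈ s, (f i : EReal)) = ((∑ i ∈ s, f i : ℝ) : EReal) := by
  classical
  induction s using Finset.induction_on with
  | empty => simp
  | insert _ _ h ih => rw [Finset.sum_insert h, Finset.sum_insert h, ih, EReal.coe_add]

lemma EReal_sum_ne_bot {ι : Type*} (s : Finset ι) (f : ι → EReal)
    (hb : ∀ i ∈ s, f i ≠ ⊥) : ∑ i ∈ s, f i ≠ ⊥ := by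
  classical
  induction s using Finset.induction_on with
  | empty => simp
  | @insert a s' h ih =>
    rw [Finset.sum_insert h]
    have h1 := hb a (Finset.mem_insert_self a s')
    have h2 := ih (fun i hi => hb i (Finset.mem_insert_of_mem hi))
    simp [EReal.add_eq_bot_iff, h1, h2]

lemma EReal_sum_top {ι : Type*} (s : Finset ι) (f : ι → EReal)
    (hb : ∀ i ∈ s, f i ≠ ⊥) {i₀ : ι} (hi₀ : i₀ ∈ s) (ht : f i₀ = ⊤) :
    ∑ i ∈ s, f i = ⊤ := by
  classical
  rw [← Finset.add_sum_erase s f hi₀, ht]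
  exact EReal.top_add_of_ne_bot
    (EReal_sum_ne_bot _ _ (fun i hi => hb i (Finset.mem_of_mem_erase hi)))

lemma phi_nonneg {x : ℝ} (hx : 0 < x) : 0 ≤ x - 1 - Real.log x := by
  have := Real.log_le_sub_one_of_pos hx; linarith

lemma sq_sqrt_le_phi {x : ℝ} (hx : 0 < x) :
    (Real.sqrt x - 1) ^ 2 ≤ x - 1 - Real.log x := by
  have h1 : Real.log x = 2 * Real.log (Real.sqrt x) := by
    rw [Real.log_sqrt hx.le]; ring
  have h2 : Real.log (Real.sqrt x) ≤ Real.sqrt x - 1 :=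
    Real.log_le_sub_one_of_pos (Real.sqrt_pos.mpr hx)
  have h3 : Real.sqrt x ^ 2 = x := Real.sq_sqrt hx.le
  nlinarith

lemma dkl_eq_top {S : Type*} [Fintype S] {p q : S → ℝ} {a : S}
    (hpa : p a ≠ 0) (hqa : q a = 0) : DKL p q = ⊤ := by
  classical
  unfold DKL
  refine EReal_sum_top _ _ (fun i _ => ?_) (Finset.mem_univ a) ?_
  · split_ifs
    · simp
    · simp
    · exact EReal.coe_ne_bot _
  · simp [hpa, hqa]

lemma dkl_eq_coe {S : Type*} [Fintype S] {p q : S → ℝ}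
    (hp : ∀ a, 0 < p a) (hq : ∀ a, 0 < q a) :
    DKL p q = ((∑ a, p a * Real.log (p a / q a) : ℝ) : EReal) := by
  unfold DKL
  rw [← EReal_sum_coe]
  refine Finset.sum_congr rfl fun a _ => ?_
  rw [if_neg (hp a).ne', if_neg (hq a).ne']

lemma sum_log_eq_phi {S : Type*} [Fintype S] {p q : S → ℝ}
    (hp : ∀ a, 0 < p a) (hq : ∀ a, 0 < q a)
    (hp1 : ∑ a, p a = 1) (hq1 : ∑ a, q a = 1) :
    ∑ a, p a * Real.log (p a / q a)
      = ∑ a, p a * (q a / p a - 1 - Real.log (q a / p a)) := by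
  have key : ∀ a, p a * (q a / p a - 1 - Real.log (q a / p a))
      = p a * Real.log (p a / q a) + (q a - p a) := by
    intro a
    have hpa := hp a; have hqa := hq a
    rw [Real.log_div hqa.ne' hpa.ne', Real.log_div hpa.ne' hqa.ne']
    field_simp
    ring
  rw [Finset.sum_congr rfl fun a _ => key a, Finset.sum_add_distrib,
    Finset.sum_sub_distrib, hp1, hq1]
  ring

lemma dkl_nonneg {S : Type*} [Fintype S] {p q : S → ℝ}
    (hp : ∀ a, 0 < p a) (hp1 : ∑ a, p a = 1)
    (hq0 : ∀ a, 0 ≤ q a) (hq1 : ∑ a, q a = 1) : 0 ≤ DKL p q := by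
  by_cases h : ∀ a, 0 < q a
  · rw [dkl_eq_coe hp h, sum_log_eq_phi hp h hp1 hq1]
    have h0 : (0:ℝ) ≤ ∑ a, p a * (q a / p a - 1 - Real.log (q a / p a)) :=
      Finset.sum_nonneg fun a _ =>
        mul_nonneg (hp a).le (phi_nonneg (div_pos (h a) (hp a)))
    exact_mod_cast h0
  · push_neg at h
    obtain ⟨a, ha⟩ := h
    rw [dkl_eq_top (hp a).ne' (le_antisymm ha (hq0 a))]
    exact le_top

lemma dkl_self {S : Type*} [Fintype S] {p : S → ℝ} (hp : ∀ a, 0 < p a) :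
    DKL p p = 0 := by
  rw [dkl_eq_coe hp hp, Finset.sum_eq_zero fun a _ => by
    rw [div_self (hp a).ne', Real.log_one, mul_zero]]
  rfl

lemma dkl_close {S : Type*} [Fintype S] {p q : S → ℝ} {η : ℝ}
    (hp : ∀ a, 0 < p a) (hp1 : ∑ a, p a = 1)
    (hq0 : ∀ a, 0 ≤ q a) (hq1 : ∑ a, q a = 1)
    (hη : 0 < η) (hlt : DKL p q < (η : EReal)) (a : S) :
    |q a - p a| < η + 2 * Real.sqrt η := by
  have hq : ∀ b, 0 < q b := by
    intro b
    rcases (hq0 b).lt_or_eq with h | h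
    · exact h
    · exfalso
      rw [dkl_eq_top (hp b).ne' h.symm] at hlt
      exact not_top_lt hlt
  rw [dkl_eq_coe hp hq, sum_log_eq_phi hp hq hp1 hq1] at hlt
  have hR : ∑ b, p b * (q b / p b - 1 - Real.log (q b / p b)) < η := by
    exact_mod_cast hlt
  have hterm : p a * (q a / p a - 1 - Real.log (q a / p a)) < η :=
    lt_of_le_of_lt
      (Finset.single_le_sum
        (fun b _ => mul_nonneg (hp b).le (phi_nonneg (div_pos (hq b) (hp b))))
        (Finset.mem_univ a)) hR
  set P := p a with hPdef
  have hP : 0 < P := hp a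
  have hP1 : P ≤ 1 := by
    rw [← hp1]
    exact Finset.single_le_sum (fun b _ => (hp b).le) (Finset.mem_univ a)
  set x := q a / p a with hxdef
  have hx : 0 < x := div_pos (hq a) (hp a)
  have hsqphi : (Real.sqrt x - 1) ^ 2 ≤ x - 1 - Real.log x := sq_sqrt_le_phi hx
  have hPsq : P * (Real.sqrt x - 1) ^ 2 < η :=
    lt_of_le_of_lt (by nlinarith) hterm
  set s := Real.sqrt x with hsdef
  have hs0 : 0 ≤ s := Real.sqrt_nonneg x
  have hs2 : s ^ 2 = x := Real.sq_sqrt hx.le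
  set t := Real.sqrt (η / P) with htdef
  have ht0 : 0 ≤ t := Real.sqrt_nonneg _
  have ht2 : t ^ 2 = η / P := Real.sq_sqrt (by positivity)
  have hPt2 : P * t ^ 2 = η := by rw [ht2]; field_simp
  have habs : |s - 1| < t := by
    have h1 : (s - 1) ^ 2 < t ^ 2 := by rw [ht2]; exact lt_div_iff₀ hP |>.mpr (by linarith [hPsq])
    calc |s - 1| = Real.sqrt ((s - 1) ^ 2) := (Real.sqrt_sq_eq_abs _).symm
      _ < Real.sqrt (t ^ 2) := by
          apply (Real.sqrt_lt_sqrt (sq_nonneg _) h1)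
      _ = t := Real.sqrt_sq ht0
  set u := Real.sqrt η with hudef
  have hu0 : 0 ≤ u := Real.sqrt_nonneg _
  have hu2 : u ^ 2 = η := Real.sq_sqrt hη.le
  have hPt : P * t ≤ u := by
    have h1 : (P * t) ^ 2 ≤ u ^ 2 := by nlinarith
    calc P * t = Real.sqrt ((P * t) ^ 2) := by
          rw [Real.sqrt_sq (by positivity)]
      _ ≤ Real.sqrt (u ^ 2) := Real.sqrt_le_sqrt h1
      _ = u := Real.sqrt_sq hu0
  have hqa : q a = P * s ^ 2 := by
    rw [hs2, hxdef, hPdef]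
    field_simp
    rw [mul_div_assoc, div_self (hp a).ne', mul_one]
  have habs' := abs_lt.mp habs
  rw [hqa, abs_lt]
  constructor <;> nlinarith [habs'.1, habs'.2, mul_pos hP (add_pos_of_nonneg_of_pos hs0 one_pos)]

section Main

variable {X O : Type*} [Fintype X] [DecidableEq X] [Fintype O] [DecidableEq O]

noncomputable def margMap (𝒞 : Finset (Finset X)) (p : (X → O) → ℝ) : BSpace 𝒞 O :=
  fun C f => ∑ g : X → O, if ∀ x : {x // x ∈ C.1}, g x.1 = f x then p g else 0

lemma margMap_probDist {𝒞 : Finset (Finset X)} {p : (X → O) → ℝ}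
    (hp : IsProbDist p) (C : {C : Finset X // C ∈ 𝒞}) :
    IsProbDist (margMap 𝒞 p C) := by
  classical
  constructor
  · intro f
    refine Finset.sum_nonneg fun g _ => ?_
    split_ifs
    · exact hp.1 g
    · exact le_rfl
  · simp only [margMap]
    rw [Finset.sum_comm]
    rw [← hp.2]
    refine Finset.sum_congr rfl fun g _ => ?_
    have hiff : ∀ f : {x // x ∈ C.1} → O,
        (∀ x : {x // x ∈ C.1}, g x.1 = f x) ↔ f = fun x => g x.1 := by
      intro f
      constructor
      · intro h; funext x; exact (h x).symm
      · intro h x; rw [h]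
    rw [Finset.sum_congr rfl fun f _ => if_congr (hiff f) rfl rfl]
    simp [Finset.sum_ite_eq' Finset.univ (fun x : {x // x ∈ C.1} => g x.1) (fun _ => p g)]

lemma margMap_continuous (𝒞 : Finset (Finset X)) :
    Continuous (margMap (O := O) 𝒞) := by
  apply continuous_pi; intro C; apply continuous_pi; intro f
  apply continuous_finset_sum; intro g _
  by_cases h : ∀ x : {x // x ∈ C.1}, g x.1 = f x
  · simp only [if_pos h]; exact continuous_apply g
  · simp only [if_neg h]; exact continuous_const

lemma NC_probDist {𝒞 : Finset (Finset X)} {Bnc : BSpace 𝒞 O}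
    (h : NCbehavior 𝒞 Bnc) (C : {C : Finset X // C ∈ 𝒞}) :
    IsProbDist (Bnc C) := by
  obtain ⟨p, hp, hB⟩ := h
  have : Bnc C = margMap 𝒞 p C := funext fun f => hB C f
  rw [this]
  exact margMap_probDist hp C

lemma NC_closed (𝒞 : Finset (Finset X)) :
    IsClosed {Bnc : BSpace 𝒞 O | NCbehavior 𝒞 Bnc} := by
  have heq : {Bnc : BSpace 𝒞 O | NCbehavior 𝒞 Bnc}
      = margMap 𝒞 '' (stdSimplex ℝ (X → O)) := by
    ext Bnc
    constructor
    · rintro ⟨p, hp, hB⟩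
      exact ⟨p, hp, (funext fun C => funext fun f => (hB C f).symm)⟩
    · rintro ⟨p, hp, rfl⟩
      exact ⟨p, hp, fun C f => rfl⟩
  rw [heq]
  exact ((isCompact_stdSimplex ℝ (X → O)).image (margMap_continuous 𝒞)).isClosed

end Main

theorem uniform_relative_entropy_faithful
    {X O : Type*} [Fintype X] [DecidableEq X] [Fintype O] [DecidableEq O] [Nonempty O]
    (𝒞 : Finset (Finset X)) (B : BSpace 𝒞 O)
    (hB : ∀ C, IsProbDist (B C))
    (hsupp : ∀ (C : {C : Finset X // C ∈ 𝒞}) (a : {x // x ∈ C.1} → O), 0 < B C a) :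
    (((𝒞.card : ℝ)⁻¹ : EReal) *
        sInf {t : EReal | ∃ Bnc : BSpace 𝒞 O, NCbehavior 𝒞 Bnc ∧
          t = ∑ C : {C : Finset X // C ∈ 𝒞}, DKL (B C) (Bnc C)} = (0 : EReal)) ↔
      NCbehavior 𝒞 B := by
  classical
  set S : Set EReal := {t : EReal | ∃ Bnc : BSpace 𝒞 O, NCbehavior 𝒞 Bnc ∧
      t = ∑ C : {C : Finset X // C ∈ 𝒞}, DKL (B C) (Bnc C)} with hSdef
  have hnonneg : ∀ t ∈ S, (0 : EReal) ≤ t := by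
    rintro t ⟨Bnc, hBnc, rfl⟩
    refine Finset.sum_nonneg fun C _ => ?_
    have hq := NC_probDist hBnc C
    exact dkl_nonneg (hsupp C) (hB C).2 hq.1 hq.2
  constructor
  · intro h
    by_cases hempty : 𝒞 = ∅
    · subst hempty
      obtain ⟨o⟩ := ‹Nonempty O›
      refine ⟨fun g => if g = fun _ => o then 1 else 0, ⟨?_, ?_⟩, ?_⟩
      · intro g; dsimp only; split_ifs <;> norm_num
      · rw [Finset.sum_ite_eq' Finset.univ (fun _ => o) (fun _ => (1:ℝ))]
        simp
      · intro C
        exact absurd C.2 (Finset.notMem_empty _)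
    · have hcard : 0 < 𝒞.card := Finset.card_pos.mpr (Finset.nonempty_iff_ne_empty.mpr hempty)
      have hc : (0:ℝ) < ((𝒞.card : ℝ))⁻¹ := by positivity
      rw [← EReal.coe_inv] at h
      have hInf0 : (0 : EReal) ≤ sInf S := le_sInf hnonneg
      have hInf : sInf S = 0 := by
        by_cases htop : sInf S = ⊤
        · rw [htop, EReal.coe_mul_top_of_pos hc] at h
          exact absurd h (by simp)
        · have hbot : sInf S ≠ ⊥ := fun hb => by
            rw [hb] at hInf0
            exact absurd hInf0 (by simp)
          rw [← EReal.coe_toReal htop hbot] at h ⊢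
          rw [← EReal.coe_mul] at h
          rw [EReal.coe_eq_zero] at h ⊢
          exact (mul_eq_zero.mp h).resolve_left (by positivity)
      have hmem : B ∈ closure {Bnc : BSpace 𝒞 O | NCbehavior 𝒞 Bnc} := by
        rw [Metric.mem_closure_iff]
        intro ε hε
        set η : ℝ := min (ε / 2) (ε ^ 2 / 16) with hηdef
        have hη : 0 < η := lt_min (by linarith) (by positivity)
        have hlt0 : sInf S < (η : EReal) := by
          rw [hInf]
          exact_mod_cast hη
        obtain ⟨t, ht, hlt⟩ := sInf_lt_iff.mp hlt0
        obtain ⟨Bnc, hBncNC, rfl⟩ := ht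
        refine ⟨Bnc, hBncNC, ?_⟩
        have hqd : ∀ C, IsProbDist (Bnc C) := NC_probDist hBncNC
        have hge : ∀ C : {C : Finset X // C ∈ 𝒞}, (0 : EReal) ≤ DKL (B C) (Bnc C) :=
          fun C => dkl_nonneg (hsupp C) (hB C).2 (hqd C).1 (hqd C).2
        have hnbot : ∀ C : {C : Finset X // C ∈ 𝒞}, DKL (B C) (Bnc C) ≠ ⊥ := by
          intro C hb
          have := hge C
          rw [hb] at this
          exact absurd this (by simp)
        have hntop : ∀ C : {C : Finset X // C ∈ 𝒞}, DKL (B C) (Bnc C) ≠ ⊤ := by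
          intro C hC
          rw [EReal_sum_top Finset.univ _ (fun C' _ => hnbot C') (Finset.mem_univ C) hC] at hlt
          exact not_top_lt hlt
        have hcoe : ∀ C : {C : Finset X // C ∈ 𝒞},
            DKL (B C) (Bnc C) = (((DKL (B C) (Bnc C)).toReal : ℝ) : EReal) :=
          fun C => (EReal.coe_toReal (hntop C) (hnbot C)).symm
        rw [Finset.sum_congr rfl fun C _ => hcoe C, EReal_sum_coe] at hlt
        have hsum : ∑ C : {C : Finset X // C ∈ 𝒞}, (DKL (B C) (Bnc C)).toReal < η := by
          exact_mod_cast hlt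
        have heach : ∀ C : {C : Finset X // C ∈ 𝒞}, DKL (B C) (Bnc C) < (η : EReal) := by
          intro C
          have h1 : (DKL (B C) (Bnc C)).toReal < η :=
            lt_of_le_of_lt
              (Finset.single_le_sum
                (fun (C' : {C : Finset X // C ∈ 𝒞}) _ => EReal.coe_nonneg.mp
                  (by rw [EReal.coe_toReal (hntop C') (hnbot C')]; exact hge C')) (Finset.mem_univ C)) hsum
          rw [hcoe C]
          exact_mod_cast h1
        have hbound : η + 2 * Real.sqrt η ≤ ε := by
          have h1 : η ≤ ε / 2 := min_le_left _ _
          have h2 : Real.sqrt η ≤ ε / 4 := by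
            have h3 : η ≤ ε ^ 2 / 16 := min_le_right _ _
            calc Real.sqrt η ≤ Real.sqrt (ε ^ 2 / 16) := Real.sqrt_le_sqrt h3
              _ = ε / 4 := by
                  rw [show ε ^ 2 / 16 = (ε / 4) ^ 2 by ring, Real.sqrt_sq (by linarith)]
          linarith
        have hclose : ∀ (C : {C : Finset X // C ∈ 𝒞}) (a : {x // x ∈ C.1} → O),
            |Bnc C a - B C a| < ε := by
          intro C a
          have := dkl_close (hsupp C) (hB C).2 (hqd C).1 (hqd C).2 hη (heach C) a
          linarith
        rw [dist_pi_lt_iff hε]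
        intro C
        rw [dist_pi_lt_iff hε]
        intro a
        rw [Real.dist_eq, abs_sub_comm]
        exact hclose C a
      exact (NC_closed 𝒞).closure_subset hmem
  · intro hNC
    have h0 : (0 : EReal) ∈ S :=
      ⟨B, hNC, (Finset.sum_eq_zero fun C _ => dkl_self (hsupp C)).symm⟩
    have : sInf S = 0 := le_antisymm (sInf_le h0) (le_sInf hnonneg)
    rw [this, mul_zero]
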